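/- Let A be a unital C*-algebra, let X ∈ A be self-adjoint and invertible, and set |X| := (X²)^{1/2}. Let Y ∈ A satisfy ‖ |X|^{−1/2} Y |X|^{−1/2} ‖ < 1. Then X + Y is invertible in A. -/

import Mathlib

open scoped NNReal

private lemma commute_cfcHom_complex {A : Type*} [CStarAlgebra A] {a : A} (ha : IsStarNormal a)
    (b : A) (hb : Commute b a) (hb' : Commute b (star a)) (f : C(spectrum ℂ a, ℂ)) :
    Commute b (cfcHom ha f) := by
  induction f using ContinuousMap.induction_on_of_compact with
  | const r =>
    have h1 : (ContinuousMap.const (spectrum ℂ a) r) =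
        algebraMap ℂ C(spectrum ℂ a, ℂ) r := rfl
    rw [h1, AlgHomClass.commutes]
    exact (Algebra.commutes r b).symm
  | id => rw [cfcHom_id ha]; exact hb
  | star_id => rw [map_star, cfcHom_id ha]; exact hb'
  | add f g hf hg => rw [map_add]; exact hf.add_right hg
  | mul f g hf hg => rw [map_mul]; exact hf.mul_right hg
  | frequently f hf =>
    have hcont : Continuous (cfcHom ha : C(spectrum ℂ a, ℂ) → A) :=
      (cfcHom_isClosedEmbedding ha).continuous
    have hcl : IsClosed {g : C(spectrum ℂ a, ℂ) | Commute b (cfcHom ha g)} :=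
      isClosed_eq (continuous_const.mul hcont) (hcont.mul continuous_const)
    have h2 := mem_closure_iff_frequently.mpr hf
    exact hcl.closure_subset h2

private lemma commute_cfc_nnreal {A : Type*} [CStarAlgebra A] [PartialOrder A]
    [StarOrderedRing A] {a b : A} (f : ℝ≥0 → ℝ≥0) (ha : 0 ≤ a) (hb : Commute b a) :
    Commute b (cfc f a) := by
  have hsa : IsSelfAdjoint a := .of_nonneg ha
  rw [cfc_nnreal_eq_real f a ha, cfc_real_eq_complex _ hsa]
  refine cfc_cases (fun x => Commute b x) a _ (Commute.zero_right b) fun hf hn => ?_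
  exact commute_cfcHom_complex hn b hb (by rwa [hsa.star_eq]) _

private lemma isUnit_of_mul_self' {M : Type*} [Monoid M] {a : M} (h : IsUnit (a * a)) :
    IsUnit a := by
  obtain ⟨u, hu⟩ := h
  have h1 : a * (a * (↑u⁻¹ : M)) = 1 := by rw [← mul_assoc, ← hu, Units.mul_inv]
  have h2 : ((↑u⁻¹ : M) * a) * a = 1 := by rw [mul_assoc, ← hu, Units.inv_mul]
  have h3 : ((↑u⁻¹ : M) * a) = a * ↑u⁻¹ := by
    calc (↑u⁻¹ : M) * a = (↑u⁻¹ * a) * (a * (a * ↑u⁻¹)) := by rw [h1, mul_one]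
    _ = ((↑u⁻¹ * a) * a) * (a * ↑u⁻¹) := by simp only [mul_assoc]
    _ = a * ↑u⁻¹ := by rw [h2, one_mul]
  exact ⟨⟨a, a * ↑u⁻¹, h1, by rw [← h3, h2]⟩, rfl⟩

/-- Relative-bound invertibility lemma: if `X` is self-adjoint and invertible with
`|X| = (X²)^{1/2}`, and `Y` satisfies `‖|X|^{−1/2} Y |X|^{−1/2}‖ < 1`, then `X + Y`
is invertible. Here `|X|^{−1/2}` is realized as `(|X|⁻¹)^{1/2}` via the continuous
functional calculus. -/
theorem add_isUnit_of_rel_bound (A : Type*) [CStarAlgebra A]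
    [PartialOrder A] [StarOrderedRing A] (X Y : A)
    (hX : IsSelfAdjoint X) (hX' : IsUnit X)
    (hY : ‖CFC.sqrt (Ring.inverse (CFC.sqrt (X ^ 2))) * Y *
        CFC.sqrt (Ring.inverse (CFC.sqrt (X ^ 2)))‖ < 1) :
    IsUnit (X + Y) := by
  set m := CFC.sqrt (X ^ 2) with hm_def
  rcases subsingleton_or_nontrivial A with _ | _
  · exact isUnit_of_subsingleton _
  have hX2 : (0 : A) ≤ X ^ 2 := by
    have := star_mul_self_nonneg X
    rwa [hX.star_eq, ← sq] at this
  have hm0 : (0 : A) ≤ m := CFC.sqrt_nonneg _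
  have hm2 : m * m = X ^ 2 := CFC.sqrt_mul_sqrt_self _ hX2
  -- X commutes with m
  have hXm : Commute X m := by
    rw [hm_def, CFC.sqrt_eq_cfc]
    exact commute_cfc_nnreal _ hX2 ((Commute.refl X).pow_right 2)
  -- m is a unit
  have hmU : IsUnit m := isUnit_of_mul_self' (hm2 ▸ hX'.pow 2)
  set B := Ring.inverse m with hB_def
  have hmB : m * B = 1 := Ring.mul_inverse_cancel m hmU
  have hBm : B * m = 1 := Ring.inverse_mul_cancel m hmU
  have hBsa : IsSelfAdjoint B := by
    have hmsa : IsSelfAdjoint m := .of_nonneg hm0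
    have h1 : star B * m = 1 := by
      have := congrArg star hmB
      rwa [star_mul, star_one, hmsa.star_eq] at this
    calc star B = star B * (m * B) := by rw [hmB, mul_one]
    _ = (star B * m) * B := by rw [mul_assoc]
    _ = B := by rw [h1, one_mul]
  have hB0 : (0 : A) ≤ B := by
    have : B = star B * m * B := by
      rw [hBsa.star_eq, mul_assoc, hmB, mul_one]
    rw [this]
    exact star_left_conjugate_nonneg hm0 B
  -- X commutes with B
  have hXB : Commute X B := by
    show X * B = B * X
    calc X * B = B * m * X * B := by rw [hBm, one_mul]
    _ = B * (m * X) * B := by rw [mul_assoc B m X]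
    _ = B * (X * m) * B := by rw [← hXm.eq]
    _ = B * X * (m * B) := by simp only [mul_assoc]
    _ = B * X := by rw [hmB, mul_one]
  -- m commutes with B
  have hmBc : Commute m B := by
    show m * B = B * m
    rw [hmB, hBm]
  set S := CFC.sqrt B with hS_def
  have hS0 : (0 : A) ≤ S := CFC.sqrt_nonneg _
  have hSsa : IsSelfAdjoint S := .of_nonneg hS0
  have hSS : S * S = B := CFC.sqrt_mul_sqrt_self _ hB0
  have hXS : Commute X S := by
    rw [hS_def, CFC.sqrt_eq_cfc]; exact commute_cfc_nnreal _ hB0 hXB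
  have hmS : Commute m S := by
    rw [hS_def, CFC.sqrt_eq_cfc]; exact commute_cfc_nnreal _ hB0 hmBc
  have hBU : IsUnit B := ⟨⟨B, m, hBm, hmB⟩, rfl⟩
  have hSU : IsUnit S := isUnit_of_mul_self' (hSS ▸ hBU)
  set u := S * X * S with hu_def
  set v := S * Y * S with hv_def
  -- u * u = 1
  have huu : u * u = 1 := by
    have h1 : X * B * X = m := by
      rw [hXB.eq, mul_assoc, ← sq, ← hm2, ← mul_assoc, hBm, one_mul]
    have h2 : S * m * S = 1 := by
      rw [← hmS.eq, mul_assoc, hSS, hmB]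
    calc u * u = S * (X * B * X) * S := by rw [hu_def, ← hSS]; noncomm_ring
    _ = 1 := by rw [h1, h2]
  -- u is self-adjoint
  have husa : star u = u := by
    simp only [hu_def, star_mul, hSsa.star_eq, hX.star_eq, mul_assoc]
  -- ‖u‖ = 1
  have hun : ‖u‖ = 1 := by
    have h1 : ‖u‖ * ‖u‖ = 1 := by
      rw [← CStarRing.norm_star_mul_self, husa, huu, norm_one]
    nlinarith [norm_nonneg u]
  -- 1 + u * v is a unit
  have h1uv : IsUnit (1 + u * v) := by
    have hn : ‖-(u * v)‖ < 1 := by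
      rw [norm_neg]
      calc ‖u * v‖ ≤ ‖u‖ * ‖v‖ := norm_mul_le u v
      _ = ‖v‖ := by rw [hun, one_mul]
      _ < 1 := hY
    have := isUnit_one_sub_of_norm_lt_one hn
    rwa [sub_neg_eq_add] at this
  -- u + v is a unit
  have huv : IsUnit (u + v) := by
    have : u * (1 + u * v) = u + v := by
      rw [mul_add, mul_one, ← mul_assoc, huu, one_mul]
    rw [← this]
    exact (isUnit_of_mul_self' (huu ▸ isUnit_one)).mul h1uv
  -- conclude
  have hkey : S * (X + Y) * S = u + v := by
    simp only [hu_def, hv_def, mul_add, add_mul]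
  obtain ⟨su, hsu⟩ := hSU
  have h5 : (↑su⁻¹ : A) * (S * (X + Y) * S) * ↑su⁻¹ = X + Y := by
    rw [← hsu]
    calc (↑su⁻¹ : A) * (↑su * (X + Y) * ↑su) * ↑su⁻¹
        = (↑su⁻¹ * ↑su) * (X + Y) * (↑su * ↑su⁻¹) := by noncomm_ring
    _ = X + Y := by rw [Units.inv_mul, Units.mul_inv, one_mul, mul_one]
  rw [← h5, hkey]
  exact (su⁻¹.isUnit.mul huv).mul su⁻¹.isUnit
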